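/- Let G be a finite group that is p-solvable for a prime p, and let P be a Sylow p-subgroup of G. Then for every g ∈ G, the coset gP contains an element of order prime to p. -/

import Mathlib

open Pointwise

/-- A finite group is `p`-solvable if it has a subnormal series each of whose factors is
either a `p`-group or has order prime to `p` (equivalently, every composition factor is a
`p`-group or a `p'`-group).  The factor at stage `i` has order
`(s i.castSucc).relIndex (s i.succ)`. -/
def IsPSolvable (p : ℕ) (G : Type*) [Group G] : Prop :=
  ∃ (n : ℕ) (s : Fin (n + 1) → Subgroup G),
    s 0 = ⊥ ∧ s (Fin.last n) = ⊤ ∧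
    ∀ i : Fin n,
      s i.castSucc ≤ s i.succ ∧
      ((s i.castSucc).subgroupOf (s i.succ)).Normal ∧
      ((∃ k : ℕ, (s i.castSucc).relIndex (s i.succ) = p ^ k) ∨
        ¬ p ∣ (s i.castSucc).relIndex (s i.succ))

section Aux

open Subgroup

variable {p : ℕ} {G : Type*} [Group G]

private lemma factor_dvd_transfer (hp : p.Prime) {a b : ℕ} (hdvd : a ∣ b)
    (h : (∃ k, b = p ^ k) ∨ ¬ p ∣ b) : (∃ k, a = p ^ k) ∨ ¬ p ∣ a := by
  rcases h with ⟨k, rfl⟩ | h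
  · obtain ⟨m, -, rfl⟩ := (Nat.dvd_prime_pow hp).mp hdvd
    exact Or.inl ⟨m, rfl⟩
  · exact Or.inr fun hpa => h (hpa.trans hdvd)

private lemma subgroupOf_normal_inf {A B : Subgroup G} (hAB : A ≤ B)
    (hN : (A.subgroupOf B).Normal) (H : Subgroup G) :
    (((A ⊓ H).subgroupOf H).subgroupOf ((B ⊓ H).subgroupOf H)).Normal := by
  constructor
  intro n hn b
  let f : ↥((B ⊓ H).subgroupOf H) →* G := H.subtype.comp ((B ⊓ H).subgroupOf H).subtype
  have hn' : f n ∈ A ⊓ H := Subgroup.mem_subgroupOf.mp (Subgroup.mem_subgroupOf.mp hn)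
  have hb' : f b ∈ B ⊓ H := Subgroup.mem_subgroupOf.mp b.2
  have key : f b * f n * (f b)⁻¹ ∈ A := by
    have := hN.conj_mem ⟨f n, hAB hn'.1⟩ (Subgroup.mem_subgroupOf.mpr hn'.1) ⟨f b, hb'.1⟩
    simpa [Subgroup.mem_subgroupOf] using this
  rw [Subgroup.mem_subgroupOf, Subgroup.mem_subgroupOf]
  show f (b * n * b⁻¹) ∈ A ⊓ H
  rw [map_mul, map_mul, map_inv]
  exact ⟨key, H.mul_mem (H.mul_mem hb'.2 hn'.2) (H.inv_mem hb'.2)⟩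

private lemma relindex_dvd_of_le_of_normal {A B C : Subgroup G} (hAB : A ≤ B) (hCB : C ≤ B)
    (hN : (A.subgroupOf B).Normal) : A.relIndex C ∣ A.relIndex B := by
  rw [← Subgroup.relIndex_subgroupOf hCB]
  exact Subgroup.relIndex_dvd_index_of_normal (A.subgroupOf B) (C.subgroupOf B)

lemma IsPSolvable.subgroup (hp : p.Prime) (h : IsPSolvable p G) (H : Subgroup G) :
    IsPSolvable p H := by
  obtain ⟨n, s, h0, hl, hf⟩ := h
  refine ⟨n, fun i => (s i ⊓ H).subgroupOf H, ?_, ?_, ?_⟩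
  · show (s 0 ⊓ H).subgroupOf H = ⊥
    rw [h0, bot_inf_eq, Subgroup.bot_subgroupOf]
  · show (s (Fin.last n) ⊓ H).subgroupOf H = ⊤
    rw [hl, top_inf_eq, Subgroup.subgroupOf_self]
  · intro i
    obtain ⟨hle, hnorm, hfac⟩ := hf i
    have h2 : s i.castSucc ⊓ H = s i.castSucc ⊓ (s i.succ ⊓ H) := by
      rw [← inf_assoc, inf_eq_left.mpr hle]
    refine ⟨Subgroup.comap_mono (inf_le_inf_right H hle), subgroupOf_normal_inf hle hnorm H, ?_⟩
    have h1 : ((s i.castSucc ⊓ H).subgroupOf H).relIndex ((s i.succ ⊓ H).subgroupOf H)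
        = (s i.castSucc ⊓ H).relIndex (s i.succ ⊓ H) :=
      Subgroup.relIndex_subgroupOf inf_le_right
    have h3 : (s i.castSucc ⊓ H).relIndex (s i.succ ⊓ H)
        = (s i.castSucc).relIndex (s i.succ ⊓ H) := by
      rw [h2, Subgroup.inf_relIndex_right]
    show (∃ k, ((s i.castSucc ⊓ H).subgroupOf H).relIndex ((s i.succ ⊓ H).subgroupOf H) = p ^ k)
        ∨ ¬ p ∣ ((s i.castSucc ⊓ H).subgroupOf H).relIndex ((s i.succ ⊓ H).subgroupOf H)
    rw [h1, h3]
    exact factor_dvd_transfer hp (relindex_dvd_of_le_of_normal hle inf_le_left hnorm) hfac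

private lemma subgroupOf_normal_map {G' : Type*} [Group G'] (f : G →* G') {A B : Subgroup G}
    (hAB : A ≤ B) (hN : (A.subgroupOf B).Normal) :
    ((A.map f).subgroupOf (B.map f)).Normal := by
  constructor
  intro n hn b
  rw [Subgroup.mem_subgroupOf] at hn ⊢
  obtain ⟨a, ha, hae⟩ := hn
  obtain ⟨b', hb', hbe⟩ := b.2
  refine ⟨b' * a * b'⁻¹, ?_, ?_⟩
  · have := hN.conj_mem ⟨a, hAB ha⟩ (Subgroup.mem_subgroupOf.mpr ha) ⟨b', hb'⟩
    exact Subgroup.mem_subgroupOf.mp this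
  · have hcoe : ((b * n * b⁻¹ : ↥(B.map f)) : G') = (b : G') * (n : G') * (b : G')⁻¹ := rfl
    rw [hcoe, map_mul, map_mul, map_inv, hae, hbe]

lemma IsPSolvable.quotient (hp : p.Prime) (h : IsPSolvable p G) (N : Subgroup G) [N.Normal] :
    IsPSolvable p (G ⧸ N) := by
  classical
  obtain ⟨n, s, h0, hl, hf⟩ := h
  let π := QuotientGroup.mk' N
  have hπ : Function.Surjective π := QuotientGroup.mk'_surjective N
  refine ⟨n, fun i => (s i).map π, ?_, ?_, ?_⟩
  · show (s 0).map π = ⊥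
    rw [h0]; exact Subgroup.map_bot π
  · show (s (Fin.last n)).map π = ⊤
    rw [hl]; exact Subgroup.map_top_of_surjective π hπ
  · intro i
    obtain ⟨hle, hnorm, hfac⟩ := hf i
    refine ⟨Subgroup.map_mono hle, subgroupOf_normal_map π hle hnorm, ?_⟩
    have h1 : ((s i.castSucc).map π).relIndex ((s i.succ).map π)
        = (s i.castSucc ⊔ N).relIndex (s i.succ) := by
      rw [← Subgroup.relIndex_comap (H := (s i.castSucc).map π) π (s i.succ),
        Subgroup.comap_map_eq, QuotientGroup.ker_mk']
    show (∃ k, ((s i.castSucc).map π).relIndex ((s i.succ).map π) = p ^ k)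
        ∨ ¬ p ∣ ((s i.castSucc).map π).relIndex ((s i.succ).map π)
    rw [h1]
    exact factor_dvd_transfer hp
      (Subgroup.relIndex_dvd_of_le_left (s i.succ) le_sup_left) hfac

private lemma normal_of_subgroupOf_top {K : Subgroup G} (h : (K.subgroupOf ⊤).Normal) :
    K.Normal := by
  constructor
  intro x hx g
  have := h.conj_mem ⟨x, Subgroup.mem_top x⟩ (Subgroup.mem_subgroupOf.mpr hx)
    ⟨g, Subgroup.mem_top g⟩
  exact Subgroup.mem_subgroupOf.mp this

private lemma exists_penult (hps : IsPSolvable p G) (hnt : Nontrivial G) :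
    ∃ K : Subgroup G, K.Normal ∧ K ≠ ⊤ ∧
      ((∃ k : ℕ, K.index = p ^ k) ∨ ¬ p ∣ K.index) := by
  obtain ⟨n, s, h0, hl, hf⟩ := hps
  induction n with
  | zero =>
    exfalso
    have : (⊥ : Subgroup G) = ⊤ := by
      rw [← h0, ← hl]
      congr 1
    exact bot_ne_top this
  | succ n ih =>
    by_cases hK : s (Fin.castSucc (Fin.last n)) = ⊤
    · refine ih (fun i => s (Fin.castSucc i)) ?_ hK ?_
      · show s (Fin.castSucc 0) = ⊥
        rwa [Fin.castSucc_zero]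
      · intro i
        show s (Fin.castSucc (Fin.castSucc i)) ≤ s (Fin.castSucc (Fin.succ i)) ∧
          ((s (Fin.castSucc (Fin.castSucc i))).subgroupOf
            (s (Fin.castSucc (Fin.succ i)))).Normal ∧
          ((∃ k, (s (Fin.castSucc (Fin.castSucc i))).relIndex
              (s (Fin.castSucc (Fin.succ i))) = p ^ k) ∨
            ¬ p ∣ (s (Fin.castSucc (Fin.castSucc i))).relIndex
              (s (Fin.castSucc (Fin.succ i))))
        rw [← Fin.succ_castSucc]
        exact hf i.castSucc
    · have hfl := hf (Fin.last n)
      rw [Fin.succ_last, hl] at hfl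
      obtain ⟨-, hnorm, hfac⟩ := hfl
      rw [Subgroup.relIndex_top_right] at hfac
      exact ⟨s (Fin.castSucc (Fin.last n)), normal_of_subgroupOf_top hnorm, hK, hfac⟩

private lemma card_mul_relindex' {H K : Subgroup G} (h : H ≤ K) :
    Nat.card H * H.relIndex K = Nat.card K := by
  have h1 : Nat.card (H.subgroupOf K) = Nat.card H :=
    Nat.card_congr (Subgroup.subgroupOfEquivOfLe h).toEquiv
  rw [Subgroup.relIndex, ← h1]
  exact Subgroup.card_mul_index (H.subgroupOf K)

private lemma knormal_normal_subgroupOf {K A : Subgroup G} (hA : A ≤ K)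
    (hAn : ∀ k ∈ K, ∀ a ∈ A, k * a * k⁻¹ ∈ A) : (A.subgroupOf K).Normal := by
  constructor
  intro n hn k
  rw [Subgroup.mem_subgroupOf] at hn ⊢
  exact hAn (k : G) k.2 (n : G) hn

private lemma knormal_sup {K A B : Subgroup G} (hk : K.Normal)
    (hA : A ≤ K) (hAn : ∀ k ∈ K, ∀ a ∈ A, k * a * k⁻¹ ∈ A)
    (hB : B ≤ K) (hBn : ∀ k ∈ K, ∀ b ∈ B, k * b * k⁻¹ ∈ B) :
    A ⊔ B ≤ K ∧ (∀ k ∈ K, ∀ x ∈ A ⊔ B, k * x * k⁻¹ ∈ A ⊔ B) := by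
  refine ⟨sup_le hA hB, fun k hk x hx => ?_⟩
  have h1 : (A ⊔ B).map (MulAut.conj k).toMonoidHom ≤ A ⊔ B := by
    rw [Subgroup.map_sup]
    refine sup_le ?_ ?_
    · rintro _ ⟨a, ha, rfl⟩
      exact Subgroup.mem_sup_left (hAn k hk a ha)
    · rintro _ ⟨b, hb, rfl⟩
      exact Subgroup.mem_sup_right (hBn k hk b hb)
  exact h1 ⟨x, hx, rfl⟩

private lemma map_subgroupOf_sup {K A B : Subgroup G} (hA : A ≤ K) (hB : B ≤ K) :
    ((A.subgroupOf K) ⊔ (B.subgroupOf K)).map K.subtype = A ⊔ B := by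
  rw [Subgroup.map_sup, Subgroup.subgroupOf_map_subtype, Subgroup.subgroupOf_map_subtype,
    inf_eq_left.mpr hA, inf_eq_left.mpr hB]

private lemma card_sup_dvd_of_knormal [Finite G] {K A B : Subgroup G}
    (hA : A ≤ K) (hAn : ∀ k ∈ K, ∀ a ∈ A, k * a * k⁻¹ ∈ A) (hB : B ≤ K) :
    Nat.card ↥(A ⊔ B) ∣ Nat.card A * Nat.card B := by
  have hA' : (A.subgroupOf K).Normal := knormal_normal_subgroupOf hA hAn
  have hmap := map_subgroupOf_sup hA hB
  have hcard : Nat.card ↥((A.subgroupOf K) ⊔ (B.subgroupOf K)) = Nat.card ↥(A ⊔ B) := by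
    rw [← hmap]
    exact Nat.card_congr
      (Subgroup.equivMapOfInjective _ K.subtype K.subtype_injective).toEquiv
  have h1 : Nat.card ↥((A.subgroupOf K) ⊔ (B.subgroupOf K))
      = Nat.card (A.subgroupOf K) * (A.subgroupOf K).relIndex ((A.subgroupOf K) ⊔ (B.subgroupOf K)) :=
    (card_mul_relindex' le_sup_left).symm
  have h2 : (A.subgroupOf K).relIndex ((A.subgroupOf K) ⊔ (B.subgroupOf K))
      = (A.subgroupOf K).relIndex (B.subgroupOf K) :=
    Subgroup.relIndex_sup_left _ _
  have h3 : (A.subgroupOf K).relIndex (B.subgroupOf K) ∣ Nat.card (B.subgroupOf K) :=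
    Subgroup.index_dvd_card _
  have e1 : Nat.card (A.subgroupOf K) = Nat.card A :=
    Nat.card_congr (Subgroup.subgroupOfEquivOfLe hA).toEquiv
  have e2 : Nat.card (B.subgroupOf K) = Nat.card B :=
    Nat.card_congr (Subgroup.subgroupOfEquivOfLe hB).toEquiv
  rw [← hcard, h1, h2, e1]
  exact Nat.mul_dvd_mul dvd_rfl (e2 ▸ h3)

private lemma isPGroup_sup_of_knormal {K A B : Subgroup G}
    (hA : A ≤ K) (hAn : ∀ k ∈ K, ∀ a ∈ A, k * a * k⁻¹ ∈ A) (hB : B ≤ K)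
    (hpA : IsPGroup p A) (hpB : IsPGroup p B) : IsPGroup p ↥(A ⊔ B) := by
  have hA' : (A.subgroupOf K).Normal := knormal_normal_subgroupOf hA hAn
  have h1 : IsPGroup p ↥((A.subgroupOf K) ⊔ (B.subgroupOf K)) :=
    IsPGroup.to_sup_of_normal_left (hpA.of_equiv (Subgroup.subgroupOfEquivOfLe hA).symm)
      (hpB.of_equiv (Subgroup.subgroupOfEquivOfLe hB).symm)
  have h2 := h1.map K.subtype
  rwa [map_subgroupOf_sup hA hB] at h2

universe u

private lemma exists_normal_p_or_pprime (hp : p.Prime) :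
    ∀ (n : ℕ) (G : Type u) [Group G] [Finite G], Nat.card G ≤ n →
      IsPSolvable p G → Nontrivial G →
      ∃ N : Subgroup G, N.Normal ∧ N ≠ ⊥ ∧ (IsPGroup p ↥N ∨ ¬ p ∣ Nat.card ↥N) := by
  intro n
  induction n with
  | zero =>
    intro G _ _ hcard _ _
    exact absurd hcard (by have := Nat.card_pos (α := G); omega)
  | succ n ih =>
    intro G _ _ hcard hps hnt
    obtain ⟨K, hKnorm, hKtop, hKfac⟩ := exists_penult hps hnt
    by_cases hKbot : K = ⊥
    · refine ⟨⊤, inferInstance, ?_, ?_⟩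
      · intro h
        obtain ⟨x, y, hxy⟩ := hnt
        apply hxy
        have hx : x ∈ (⊥ : Subgroup G) := h ▸ Subgroup.mem_top x
        have hy : y ∈ (⊥ : Subgroup G) := h ▸ Subgroup.mem_top y
        rw [Subgroup.mem_bot] at hx hy
        rw [hx, hy]
      · subst hKbot
        rw [Subgroup.index_bot] at hKfac
        rcases hKfac with ⟨k, hk⟩ | h
        · exact Or.inl (IsPGroup.of_card (by rw [Subgroup.card_top]; exact hk))
        · exact Or.inr (by rwa [Subgroup.card_top])
    · haveI : Nontrivial K := (Subgroup.nontrivial_iff_ne_bot K).mpr hKbot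
      have hlt : Nat.card K < Nat.card G := by
        have hle : Nat.card K ≤ Nat.card G :=
          Nat.le_of_dvd Nat.card_pos (Subgroup.card_subgroup_dvd_card K)
        rcases lt_or_eq_of_le hle with h | h
        · exact h
        · exact absurd (Subgroup.eq_top_of_card_eq K h) hKtop
      obtain ⟨Q, hQnorm, hQbot, hQtype⟩ :=
        ih K (by omega) (hps.subgroup hp K) inferInstance
      set Qg : Subgroup G := Q.map K.subtype with hQgdef
      have hQgK : Qg ≤ K := Subgroup.map_subtype_le Q
      have hQgn : ∀ k ∈ K, ∀ x ∈ Qg, k * x * k⁻¹ ∈ Qg := by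
        intro k hk x hx
        obtain ⟨q, hq, rfl⟩ := hx
        exact ⟨_, hQnorm.conj_mem q hq ⟨k, hk⟩, rfl⟩
      have hQgBot : Qg ≠ ⊥ := by
        intro h
        apply hQbot
        rwa [Subgroup.map_eq_bot_iff_of_injective _ K.subtype_injective] at h
      have hQgcard : Nat.card Qg = Nat.card Q :=
        (Nat.card_congr (Subgroup.equivMapOfInjective Q K.subtype K.subtype_injective).toEquiv).symm
      set f : G → Subgroup G := fun g => Qg.map (MulAut.conj g).toMonoidHom with hfdef
      have hfK : ∀ g, f g ≤ K := by
        rintro g _ ⟨x, hx, rfl⟩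
        simpa using hKnorm.conj_mem _ (hQgK hx) g
      have hfn : ∀ g, ∀ k ∈ K, ∀ y ∈ f g, k * y * k⁻¹ ∈ f g := by
        intro g k hk y hy
        obtain ⟨x, hx, rfl⟩ := hy
        have hk' : g⁻¹ * k * g ∈ K := by simpa using hKnorm.conj_mem k hk g⁻¹
        refine ⟨(g⁻¹ * k * g) * x * (g⁻¹ * k * g)⁻¹, hQgn _ hk' x hx, ?_⟩
        simp only [MulEquiv.coe_toMonoidHom, MulAut.conj_apply]
        group
      have hfcard : ∀ g, Nat.card (f g) = Nat.card Qg := fun g =>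
        (Nat.card_congr (Subgroup.equivMapOfInjective Qg _ (MulAut.conj g).injective).toEquiv).symm
      have hfp : (∀ g, IsPGroup p ↥Q → IsPGroup p ↥(f g)) := fun g hQ =>
        (hQ.map K.subtype).map _
      set N : Subgroup G := ⨆ g : G, f g with hNdef
      haveI : Fintype G := Fintype.ofFinite G
      have hNsup : N = Finset.univ.sup f := by
        rw [Finset.sup_eq_iSup]
        simp [hNdef]
      have hQgN : Qg ≤ N := by
        have h1 : Qg ≤ f 1 := by
          intro x hx
          exact ⟨x, hx, by simp⟩
        exact h1.trans (le_iSup f 1)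
      have hNbot : N ≠ ⊥ := fun h => hQgBot (le_bot_iff.mp (h ▸ hQgN))
      have hmapconj : ∀ h g : G, (f g).map (MulAut.conj h).toMonoidHom = f (h * g) := by
        intro h g
        show (Qg.map _).map _ = Qg.map _
        rw [Subgroup.map_map]
        congr 1
        ext y
        simp only [MonoidHom.comp_apply, MulEquiv.coe_toMonoidHom, MulAut.conj_apply]
        group
      have hNnorm : N.Normal := by
        constructor
        intro x hx h
        have hmap : N.map (MulAut.conj h).toMonoidHom = N := by
          rw [hNdef, Subgroup.map_iSup]
          rw [iSup_congr (hmapconj h)]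
          apply le_antisymm
          · exact iSup_le fun g => le_iSup f (h * g)
          · refine iSup_le fun g => ?_
            have := le_iSup (fun g => f (h * g)) (h⁻¹ * g)
            simpa using this
        have hmem := Subgroup.mem_map_of_mem (MulAut.conj h).toMonoidHom hx
        rw [hmap] at hmem
        simpa using hmem
      rcases hQtype with hQp | hQp'
      · have hpred : (Finset.univ.sup f ≤ K) ∧
            (∀ k ∈ K, ∀ x ∈ Finset.univ.sup f, k * x * k⁻¹ ∈ Finset.univ.sup f) ∧
            IsPGroup p ↥(Finset.univ.sup f) := by
          refine Finset.sup_induction (p := fun X => X ≤ K ∧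
            (∀ k ∈ K, ∀ x ∈ X, k * x * k⁻¹ ∈ X) ∧ IsPGroup p ↥X) ?_ ?_ ?_
          · refine ⟨bot_le, ?_, IsPGroup.of_bot⟩
            intro k hk x hx
            simp only [Subgroup.mem_bot] at hx
            simp [hx]
          · rintro X ⟨hX1, hX2, hX3⟩ Y ⟨hY1, hY2, hY3⟩
            obtain ⟨j1, j2⟩ := knormal_sup hKnorm hX1 hX2 hY1 hY2
            exact ⟨j1, j2, isPGroup_sup_of_knormal hX1 hX2 hY1 hX3 hY3⟩
          · intro g _
            exact ⟨hfK g, hfn g, hfp g hQp⟩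
        exact ⟨N, hNnorm, hNbot, Or.inl (by rw [hNsup]; exact hpred.2.2)⟩
      · have hpred : (Finset.univ.sup f ≤ K) ∧
            (∀ k ∈ K, ∀ x ∈ Finset.univ.sup f, k * x * k⁻¹ ∈ Finset.univ.sup f) ∧
            ¬ p ∣ Nat.card ↥(Finset.univ.sup f) := by
          refine Finset.sup_induction (p := fun X => X ≤ K ∧
            (∀ k ∈ K, ∀ x ∈ X, k * x * k⁻¹ ∈ X) ∧ ¬ p ∣ Nat.card ↥X) ?_ ?_ ?_
          · refine ⟨bot_le, ?_, ?_⟩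
            · intro k hk x hx
              simp only [Subgroup.mem_bot] at hx
              simp [hx]
            · rw [Subgroup.card_bot]
              exact hp.not_dvd_one
          · rintro X ⟨hX1, hX2, hX3⟩ Y ⟨hY1, hY2, hY3⟩
            obtain ⟨j1, j2⟩ := knormal_sup hKnorm hX1 hX2 hY1 hY2
            refine ⟨j1, j2, fun hdvd => ?_⟩
            rcases (Nat.Prime.dvd_mul hp).mp
              (hdvd.trans (card_sup_dvd_of_knormal hX1 hX2 hY1)) with h | h
            · exact hX3 h
            · exact hY3 h
          · intro g _
            refine ⟨hfK g, hfn g, ?_⟩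
            rw [hfcard g, hQgcard]
            exact hQp'
        exact ⟨N, hNnorm, hNbot, Or.inr (by rw [hNsup]; exact hpred.2.2)⟩

private lemma main_aux [hpf : Fact p.Prime] :
    ∀ (n : ℕ) (G : Type u) [Group G] [Finite G], Nat.card G ≤ n →
      IsPSolvable p G → ∀ (P : Sylow p G) (g : G),
      ∃ x ∈ g • ((P : Subgroup G) : Set G), ¬ p ∣ orderOf x := by
  have hp : p.Prime := hpf.out
  intro n
  induction n with
  | zero =>
    intro G _ _ hcard
    exact absurd hcard (by have := Nat.card_pos (α := G); omega)
  | succ n ih =>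
    intro G _ _ hcard hps P g
    rcases subsingleton_or_nontrivial G with hss | hnt
    · refine ⟨g, ?_, ?_⟩
      · have h1 : (1 : G) ∈ ((P : Subgroup G) : Set G) := (P : Subgroup G).one_mem
        exact Set.mem_smul_set.mpr ⟨1, h1, mul_one g⟩
      · have hg1 : g = 1 := Subsingleton.elim g 1
        rw [hg1, orderOf_one]
        exact hp.not_dvd_one
    · obtain ⟨N, hNnorm, hNbot, hNtype⟩ :=
        exists_normal_p_or_pprime hp (Nat.card G) G le_rfl hps hnt
      haveI : N.Normal := hNnorm
      set π := QuotientGroup.mk' N with hπdef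
      have hπ : Function.Surjective π := QuotientGroup.mk'_surjective N
      haveI : Finite (G ⧸ N) := Quotient.finite _
      haveI : Nontrivial N := (Subgroup.nontrivial_iff_ne_bot N).mpr hNbot
      have hqlt : Nat.card (G ⧸ N) ≤ n := by
        have h1 : Nat.card N * N.index = Nat.card G := Subgroup.card_mul_index N
        have h2 : N.index = Nat.card (G ⧸ N) := rfl
        have h3 : 1 < Nat.card N := Finite.one_lt_card
        have h4 : 0 < Nat.card (G ⧸ N) := Nat.card_pos
        nlinarith
      have hndvd : ¬ p ∣ ((P : Subgroup G).map π).index := by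
        intro hdvd
        exact P.not_dvd_index (hdvd.trans ((P : Subgroup G).index_map_dvd hπ))
      let P' : Sylow p (G ⧸ N) := (P.2.map π).toSylow hndvd
      obtain ⟨xbar, hxmem, hxord⟩ := ih (G ⧸ N) hqlt (hps.quotient hp N) P' (π g)
      obtain ⟨b, hb, hbe⟩ := hxmem
      obtain ⟨y, hy, hye⟩ := hb
      set x₀ := g * y with hx₀def
      have hx₀ : π x₀ = xbar := by
        rw [hx₀def, map_mul, hye, ← hbe]
        rfl
      have hx₀mem : x₀ ∈ g • ((P : Subgroup G) : Set G) :=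
        Set.mem_smul_set.mpr ⟨y, hy, rfl⟩
      rcases hNtype with hNp | hNp'
      · -- N is a p-group
        have hNP : N ≤ (P : Subgroup G) := by
          have hsup : IsPGroup p ↥(N ⊔ (P : Subgroup G)) := IsPGroup.to_sup_of_normal_left hNp P.2
          have heq : N ⊔ (P : Subgroup G) = P := P.3 hsup le_sup_right
          exact le_sup_left.trans_eq heq
        set m := orderOf xbar with hmdef
        have hm0 : 0 < m := orderOf_pos xbar
        set a := (orderOf x₀).factorization p with hadef
        set A := a * m.totient with hAdef
        have hmodeq : p ^ A ≡ 1 [MOD m] := by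
          have h1 : p.Coprime m := (Nat.Prime.coprime_iff_not_dvd hp).mpr hxord
          have h2 := (Nat.ModEq.pow_totient h1).pow a
          rwa [← pow_mul, one_pow, mul_comm] at h2
        set x := x₀ ^ (p ^ A) with hxdef
        have hπx : π x = xbar := by
          rw [hxdef, map_pow, hx₀]
          have h1 : xbar ^ (p ^ A) = xbar ^ 1 := pow_eq_pow_iff_modEq.mpr hmodeq
          rw [h1, pow_one]
        have hdmem : x₀⁻¹ * x ∈ (P : Subgroup G) := by
          apply hNP
          apply (QuotientGroup.eq_one_iff _).mp
          show π (x₀⁻¹ * x) = 1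
          rw [map_mul, map_inv, hx₀, hπx, inv_mul_cancel]
        have hxmem2 : x ∈ g • ((P : Subgroup G) : Set G) := by
          refine ⟨y * (x₀⁻¹ * x), (P : Subgroup G).mul_mem hy hdmem, ?_⟩
          show g * (y * (x₀⁻¹ * x)) = x
          rw [← mul_assoc, ← hx₀def, mul_inv_cancel_left]
        refine ⟨x, hxmem2, ?_⟩
        have hordx0 : orderOf x₀ ≠ 0 := (orderOf_pos x₀).ne'
        have hndvd0 : ¬ p ∣ orderOf x₀ / p ^ a := Nat.not_dvd_ordCompl hp hordx0
        have hgcd : Nat.gcd (orderOf x₀) (p ^ A) = p ^ a := by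
          have haA : a ≤ A := Nat.le_mul_of_pos_right a (Nat.totient_pos.mpr hm0)
          have hfact : orderOf x₀ = p ^ a * (orderOf x₀ / p ^ a) :=
            (Nat.ordProj_mul_ordCompl_eq_self (orderOf x₀) p).symm
          have hsplit : p ^ A = p ^ a * p ^ (A - a) := by
            rw [← pow_add, Nat.add_sub_cancel' haA]
          rw [hfact, hsplit, Nat.gcd_mul_left]
          have hco : Nat.gcd (orderOf x₀ / p ^ a) (p ^ (A - a)) = 1 :=
            Nat.Coprime.pow_right _
              (Nat.coprime_comm.mp ((Nat.Prime.coprime_iff_not_dvd hp).mpr hndvd0))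
          rw [hco, mul_one]
        have hord : orderOf x = orderOf x₀ / p ^ a := by
          rw [hxdef, orderOf_pow, hgcd]
        rw [hord]
        exact hndvd0
      · -- N is a p'-group
        refine ⟨x₀, hx₀mem, fun hdvd => ?_⟩
        have hz : x₀ ^ orderOf xbar ∈ N := by
          apply (QuotientGroup.eq_one_iff _).mp
          show π (x₀ ^ orderOf xbar) = 1
          rw [map_pow, hx₀, pow_orderOf_eq_one]
        have h1 : orderOf x₀ ∣ orderOf xbar * orderOf (x₀ ^ orderOf xbar) :=
          orderOf_dvd_of_pow_eq_one (by rw [pow_mul]; exact pow_orderOf_eq_one _)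
        rcases (Nat.Prime.dvd_mul hp).mp (hdvd.trans h1) with h | h
        · exact hxord h
        · exact hNp' (h.trans (N.orderOf_dvd_natCard hz))


end Aux

/-- In a finite `p`-solvable group, every coset of a Sylow `p`-subgroup contains a
`p'`-element. -/
theorem coset_of_sylow_contains_p_prime_element
    (p : ℕ) [Fact p.Prime] (G : Type*) [Group G] [Finite G]
    (hps : IsPSolvable p G) (P : Sylow p G) (g : G) :
    ∃ x ∈ g • ((P : Subgroup G) : Set G), ¬ p ∣ orderOf x := by
  exact main_aux (Nat.card G) G le_rfl hps P g
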